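/- Let f : I → I be continuous, topologically mixing in the sense that limsup_n λ(f^n(A)) = 1 for every measurable A of positive Lebesgue measure (limsup fullness). Then for every x ∈ I there is a full Lebesgue measure set C_x ⊂ I such that for all y ∈ C_x: liminf_n |f^n(y) − f^n(x)| = 0 and limsup_n |f^n(y) − f^n(x)| ≥ diam(I)/2. -/
import Mathlib


open MeasureTheory Set Filter

/-- If a continuous map of `I = [0,1]` is limsup full w.r.t. Lebesgue measure, then for
every `x ∈ I` there is a full measure set `C_x` of points `y` with
`liminf |fⁿ(y) - fⁿ(x)| = 0` and `limsup |fⁿ(y) - fⁿ(x)| ≥ diam(I)/2 = 1/2`. -/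
theorem limsup_full_typical_pairs
    (f : ℝ → ℝ) (hf : ContinuousOn f (Set.Icc 0 1))
    (hmaps : Set.MapsTo f (Set.Icc 0 1) (Set.Icc 0 1))
    (hfull : ∀ A : Set ℝ, A ⊆ Set.Icc 0 1 → MeasurableSet A → 0 < volume A →
      Filter.atTop.limsup (fun n : ℕ => volume (f^[n] '' A)) = 1) :
    ∀ x ∈ Set.Icc (0:ℝ) 1, ∃ C : Set ℝ, C ⊆ Set.Icc 0 1 ∧ volume C = 1 ∧
      ∀ y ∈ C,
        Filter.atTop.liminf (fun n : ℕ => |f^[n] y - f^[n] x|) = 0 ∧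
        (1:ℝ)/2 ≤ Filter.atTop.limsup (fun n : ℕ => |f^[n] y - f^[n] x|) := by
  intro x hx
  have hmapsI : ∀ n : ℕ, Set.MapsTo (f^[n]) (Set.Icc (0:ℝ) 1) (Set.Icc 0 1) :=
    fun n => hmaps.iterate n
  have hcontI : ∀ n : ℕ, ContinuousOn (f^[n]) (Set.Icc (0:ℝ) 1) := by
    intro n
    induction n with
    | zero => simpa using continuousOn_id
    | succ n ih =>
      rw [Function.iterate_succ']
      exact hf.comp ih (hmapsI n)
  set z : ℕ → ℝ := fun n => f^[n] x with hzdef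
  have hzmem : ∀ n, z n ∈ Set.Icc (0:ℝ) 1 := fun n => hmapsI n hx
  set g : ℕ → ℝ → ℝ := fun n y => |f^[n] y - z n| with hgdef
  have hg0 : ∀ n y, 0 ≤ g n y := fun n y => abs_nonneg _
  have hg1 : ∀ n y, y ∈ Set.Icc (0:ℝ) 1 → g n y ≤ 1 := by
    intro n y hy
    have h1 := hmapsI n hy
    have h2 := hzmem n
    simp only [Set.mem_Icc] at h1 h2
    rw [abs_le]; constructor <;> [linarith; linarith]
  -- Key vanishing lemma
  have key : ∀ (A : Set ℝ), A ⊆ Set.Icc 0 1 → MeasurableSet A → ∀ (c : ENNReal), c < 1 →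
      (∀ᶠ n in atTop, volume (f^[n] '' A) ≤ c) → volume A = 0 := by
    intro A hA hAm c hc h
    by_contra h0
    have hpos : 0 < volume A := zero_lt_iff.mpr h0
    have h1 := hfull A hA hAm hpos
    have h2 : Filter.atTop.limsup (fun n : ℕ => volume (f^[n] '' A)) ≤ c :=
      Filter.limsup_le_of_le (by isBoundedDefault) h
    rw [h1] at h2
    exact absurd h2 (not_le.2 hc)
  -- the bad sets
  set Bs : ℕ → ℕ → Set ℝ :=
    fun k N => {y ∈ Set.Icc (0:ℝ) 1 | ∀ n, N ≤ n → g n y ≤ 1/2 - 1/((k:ℝ)+3)} with hBsdef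
  set Ds : ℕ → ℕ → Set ℝ :=
    fun k N => {y ∈ Set.Icc (0:ℝ) 1 | ∀ n, N ≤ n → 1/((k:ℝ)+2) ≤ g n y} with hDsdef
  have hBsub : ∀ k N, Bs k N ⊆ Set.Icc (0:ℝ) 1 := fun k N => Set.sep_subset _ _
  have hDsub : ∀ k N, Ds k N ⊆ Set.Icc (0:ℝ) 1 := fun k N => Set.sep_subset _ _
  -- measurability
  have hclosed : ∀ (n : ℕ) (S : Set ℝ), IsClosed S →
      MeasurableSet (Set.Icc (0:ℝ) 1 ∩ (g n) ⁻¹' S) := by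
    intro n S hS
    have hgc : ContinuousOn (g n) (Set.Icc (0:ℝ) 1) :=
      ((hcontI n).sub continuousOn_const).abs
    exact (hgc.preimage_isClosed_of_isClosed isClosed_Icc hS).measurableSet
  have hBm : ∀ k N, MeasurableSet (Bs k N) := by
    intro k N
    have hEq : Bs k N =
        ⋂ n ∈ Set.Ici N, (Set.Icc (0:ℝ) 1 ∩ (g n) ⁻¹' Set.Iic (1/2 - 1/((k:ℝ)+3))) := by
      ext y
      simp only [hBsdef, Set.mem_sep_iff, Set.mem_iInter, Set.mem_inter_iff,
        Set.mem_preimage, Set.mem_Iic, Set.mem_Ici]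
      constructor
      · rintro ⟨h1, h2⟩ ; exact fun n hn => ⟨h1, h2 n hn⟩
      · intro h; exact ⟨(h N le_rfl).1, fun n hn => (h n hn).2⟩
    rw [hEq]
    exact MeasurableSet.biInter (Set.to_countable _) fun n _ => hclosed n _ isClosed_Iic
  have hDm : ∀ k N, MeasurableSet (Ds k N) := by
    intro k N
    have hEq : Ds k N =
        ⋂ n ∈ Set.Ici N, (Set.Icc (0:ℝ) 1 ∩ (g n) ⁻¹' Set.Ici (1/((k:ℝ)+2))) := by
      ext y
      simp only [hDsdef, Set.mem_sep_iff, Set.mem_iInter, Set.mem_inter_iff,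
        Set.mem_preimage, Set.mem_Ici]
      constructor
      · rintro ⟨h1, h2⟩ ; exact fun n hn => ⟨h1, h2 n hn⟩
      · intro h; exact ⟨(h N le_rfl).1, fun n hn => (h n hn).2⟩
    rw [hEq]
    exact MeasurableSet.biInter (Set.to_countable _) fun n _ => hclosed n _ isClosed_Ici
  -- B sets are null
  have hBnull : ∀ k N, volume (Bs k N) = 0 := by
    intro k N
    have hk3 : (0:ℝ) < (k:ℝ) + 3 := by positivity
    apply key _ (hBsub k N) (hBm k N) (ENNReal.ofReal (1 - 2/((k:ℝ)+3)))
    · rw [ENNReal.ofReal_lt_one]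
      have : 0 < 2/((k:ℝ)+3) := by positivity
      linarith
    · filter_upwards [eventually_ge_atTop N] with n hn
      have himg : f^[n] '' Bs k N ⊆
          Set.Icc (z n - (1/2 - 1/((k:ℝ)+3))) (z n + (1/2 - 1/((k:ℝ)+3))) := by
        rintro w ⟨y, hy, rfl⟩
        have := hy.2 n hn
        rw [hgdef] at this
        simp only [abs_le] at this
        constructor <;> [linarith [this.1]; linarith [this.2]]
      calc volume (f^[n] '' Bs k N) ≤ _ := measure_mono himg
        _ = ENNReal.ofReal (1 - 2/((k:ℝ)+3)) := by
            rw [Real.volume_Icc]; ring_nf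
  -- D sets are null
  have hDnull : ∀ k N, volume (Ds k N) = 0 := by
    intro k N
    have hk2 : (0:ℝ) < (k:ℝ) + 2 := by positivity
    set ε : ℝ := 1/((k:ℝ)+2) with hεdef
    have hε : 0 < ε := by positivity
    have hε2 : ε ≤ 1/2 := by
      rw [hεdef, div_le_div_iff₀ hk2 (by norm_num)]
      push_cast; linarith [Nat.cast_nonneg (α := ℝ) k]
    apply key _ (hDsub k N) (hDm k N) (1 - ENNReal.ofReal ε)
    · exact ENNReal.sub_lt_self ENNReal.one_ne_top one_ne_zero
        (by simpa [ENNReal.ofReal_eq_zero] using hε)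
    · filter_upwards [eventually_ge_atTop N] with n hn
      obtain ⟨hz0, hz1⟩ := Set.mem_Icc.mp (hzmem n)
      set J : Set ℝ := if z n ≤ 1/2 then Set.Ico (z n) (z n + ε) else Set.Ioc (z n - ε) (z n)
        with hJdef
      have hJsub : J ⊆ Set.Icc (0:ℝ) 1 := by
        rw [hJdef]; split_ifs with h
        · intro w hw; obtain ⟨hw1, hw2⟩ := hw
          constructor <;> [linarith; linarith]
        · intro w hw; obtain ⟨hw1, hw2⟩ := hw
          push_neg at h
          constructor <;> [linarith; linarith]
      have hJvol : volume J = ENNReal.ofReal ε := by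
        rw [hJdef]; split_ifs
        · rw [Real.volume_Ico]; ring_nf
        · rw [Real.volume_Ioc]; ring_nf
      have hJclose : ∀ w ∈ J, |w - z n| < ε := by
        intro w hw
        rw [hJdef] at hw; rw [abs_lt]
        split_ifs at hw with h
        · obtain ⟨h1, h2⟩ := hw; constructor <;> linarith
        · obtain ⟨h1, h2⟩ := hw; constructor <;> linarith
      have hdisj : f^[n] '' Ds k N ⊆ Set.Icc (0:ℝ) 1 \ J := by
        rintro w ⟨y, hy, rfl⟩
        refine ⟨hmapsI n hy.1, fun hw => ?_⟩
        have h1 := hy.2 n hn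
        have h2 := hJclose _ hw
        rw [hgdef] at h1
        exact absurd h1 (not_le.2 h2)
      have hJm : MeasurableSet J := by
        rw [hJdef]; split_ifs
        · exact measurableSet_Ico
        · exact measurableSet_Ioc
      calc volume (f^[n] '' Ds k N) ≤ volume (Set.Icc (0:ℝ) 1 \ J) := measure_mono hdisj
        _ = volume (Set.Icc (0:ℝ) 1) - volume J :=
            measure_diff hJsub hJm.nullMeasurableSet (by rw [hJvol]; exact ENNReal.ofReal_ne_top)
        _ = 1 - ENNReal.ofReal ε := by rw [Real.volume_Icc, hJvol]; norm_num
  -- the good set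
  refine ⟨Set.Icc 0 1 \ ⋃ k, ⋃ N, (Bs k N ∪ Ds k N), Set.diff_subset, ?_, ?_⟩
  · have hU : volume (⋃ k, ⋃ N, (Bs k N ∪ Ds k N)) = 0 :=
      measure_iUnion_null fun k => measure_iUnion_null fun N =>
        measure_union_null (hBnull k N) (hDnull k N)
    rw [measure_diff_null hU, Real.volume_Icc]
    norm_num
  · intro y hy
    obtain ⟨hyI, hyU⟩ := hy
    simp only [Set.mem_iUnion, Set.mem_union, not_exists, not_or] at hyU
    have hbd : Filter.atTop.IsBoundedUnder (· ≤ ·) (fun n : ℕ => g n y) :=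
      Filter.isBoundedUnder_of ⟨1, fun n => hg1 n y hyI⟩
    have hbd' : Filter.atTop.IsBoundedUnder (· ≥ ·) (fun n : ℕ => g n y) :=
      Filter.isBoundedUnder_of ⟨0, fun n => hg0 n y⟩
    constructor
    · -- liminf = 0
      have hnD : ∀ k N : ℕ, ∃ n, N ≤ n ∧ g n y < 1/((k:ℝ)+2) := by
        intro k N
        have := (hyU k N).2
        rw [hDsdef] at this
        simp only [Set.mem_sep_iff, not_and, not_forall, not_le] at this
        obtain ⟨n, hn, hlt⟩ := this hyI
        exact ⟨n, hn, hlt⟩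
      have hle : ∀ k : ℕ, Filter.atTop.liminf (fun n : ℕ => g n y) ≤ 1/((k:ℝ)+2) := by
        intro k
        refine Filter.liminf_le_of_frequently_le ?_ hbd'
        rw [Filter.frequently_atTop]
        intro N
        obtain ⟨n, hn, hlt⟩ := hnD k N
        exact ⟨n, hn, hlt.le⟩
      have h0le : 0 ≤ Filter.atTop.liminf (fun n : ℕ => g n y) :=
        Filter.le_liminf_of_le (hbd.isCoboundedUnder_ge)
          (Filter.Eventually.of_forall fun n => hg0 n y)
      refine le_antisymm ?_ h0le
      by_contra hpos
      push_neg at hpos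
      obtain ⟨k, hk⟩ := exists_nat_gt (1 / Filter.atTop.liminf (fun n : ℕ => g n y))
      have h2 : 1/((k:ℝ)+2) < Filter.atTop.liminf (fun n : ℕ => g n y) := by
        rw [div_lt_iff₀ (by positivity), ← div_lt_iff₀' hpos]
        calc 1 / Filter.atTop.liminf (fun n : ℕ => g n y) < k := hk
          _ ≤ (k:ℝ) + 2 := by linarith
      exact absurd (hle k) (not_le.2 h2)
    · -- limsup ≥ 1/2
      have hnB : ∀ k N : ℕ, ∃ n, N ≤ n ∧ 1/2 - 1/((k:ℝ)+3) < g n y := by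
        intro k N
        have := (hyU k N).1
        rw [hBsdef] at this
        simp only [Set.mem_sep_iff, not_and, not_forall, not_le] at this
        obtain ⟨n, hn, hlt⟩ := this hyI
        exact ⟨n, hn, hlt⟩
      have hge : ∀ k : ℕ, 1/2 - 1/((k:ℝ)+3) ≤ Filter.atTop.limsup (fun n : ℕ => g n y) := by
        intro k
        refine Filter.le_limsup_of_frequently_le ?_ hbd
        rw [Filter.frequently_atTop]
        intro N
        obtain ⟨n, hn, hlt⟩ := hnB k N
        exact ⟨n, hn, hlt.le⟩
      refine le_of_forall_sub_le ?_
      intro ε hε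
      obtain ⟨k, hk⟩ := exists_nat_gt (1/ε)
      have hk3 : (0:ℝ) < (k:ℝ) + 3 := by positivity
      have h1 : 1/((k:ℝ)+3) < ε := by
        rw [div_lt_iff₀ hk3, ← div_lt_iff₀' hε]
        calc 1/ε < k := hk
          _ ≤ (k:ℝ) + 3 := by linarith
      have := hge k
      linarith
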